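/- Let L_{ij} (for i in {1,2,3,4}, j in {5,6}) be eight lines in a set such that two lines L_{ij} and L_{kl} meet if and only if i≠k and j≠l (i.e., L_{ij}∩L_{kl}=∅ whenever i=k or j=l, and |L_{ij}∩L_{kl}|=1 otherwise). Then there is no set Z of 5 points such that every line L_{ij} contains exactly 2 points of Z. -/
import Mathlib


/-- Eight lines `L i j` (i ∈ {1,2,3,4}, j ∈ {5,6}) in an abstract incidence
setting: `L i j` and `L k l` are disjoint whenever they share an index coordinate
(and are distinct), and meet in exactly one point otherwise.  Then there is no set `Z`
of 5 points such that every line contains exactly 2 points of `Z`. -/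
theorem stmt_0 {P : Type*} (L : Fin 4 → Fin 2 → Set P)
    (hdisj : ∀ (i k : Fin 4) (j l : Fin 2), (i = k ∨ j = l) → (i, j) ≠ (k, l) →
      L i j ∩ L k l = ∅)
    (hmeet : ∀ (i k : Fin 4) (j l : Fin 2), i ≠ k → j ≠ l → (L i j ∩ L k l).ncard = 1) :
    ¬ ∃ Z : Set P, Z.Finite ∧ Z.ncard = 5 ∧ ∀ i j, (Z ∩ L i j).ncard = 2 := by
  classical
  rintro ⟨Z, hfin, hcard, hline⟩
  set ZF := hfin.toFinset with hZF
  have hmem : ∀ p, p ∈ ZF ↔ p ∈ Z := fun p => hfin.mem_toFinset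
  have hcardF : ZF.card = 5 := by
    rw [← hcard, ← Set.ncard_coe_finset, hZF, Set.Finite.coe_toFinset]
  -- each line contains exactly 2 points of Z
  have hline2 : ∀ ij : Fin 4 × Fin 2, (ZF.filter (· ∈ L ij.1 ij.2)).card = 2 := by
    intro ij
    have hco : ((ZF.filter (· ∈ L ij.1 ij.2) : Finset P) : Set P) = Z ∩ L ij.1 ij.2 := by
      ext x; simp [hmem]
    rw [← Set.ncard_coe_finset, hco, hline]
  -- each point of Z lies on at most 2 lines
  have key : ∀ p ∈ ZF,
      (Finset.univ.filter (fun ij : Fin 4 × Fin 2 => p ∈ L ij.1 ij.2)).card ≤ 2 := by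
    intro p _
    have hle : (Finset.univ.filter (fun ij : Fin 4 × Fin 2 => p ∈ L ij.1 ij.2)).card
        ≤ (Finset.univ : Finset (Fin 2)).card := by
      apply Finset.card_le_card_of_injOn (fun ij => ij.2)
      · intro a _; exact Finset.mem_univ _
      · intro a ha b hb hab
        simp only [Finset.coe_filter, Set.mem_setOf_eq, Finset.mem_univ, true_and] at ha hb
        by_contra hne
        have hne' : (a.1, a.2) ≠ (b.1, b.2) := by
          simpa using hne
        have hdis := hdisj a.1 b.1 a.2 b.2 (Or.inr hab) hne'
        have : p ∈ L a.1 a.2 ∩ L b.1 b.2 := ⟨ha, hb⟩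
        rw [hdis] at this
        exact this
    simpa using hle
  -- double counting
  have h16 : ∑ ij : Fin 4 × Fin 2, (ZF.filter (· ∈ L ij.1 ij.2)).card = 16 := by
    simp [hline2]
  have hswap : ∑ ij : Fin 4 × Fin 2, (ZF.filter (· ∈ L ij.1 ij.2)).card
      = ∑ p ∈ ZF, (Finset.univ.filter (fun ij : Fin 4 × Fin 2 => p ∈ L ij.1 ij.2)).card := by
    simp_rw [Finset.card_filter]
    exact Finset.sum_comm
  have h10 : ∑ p ∈ ZF, (Finset.univ.filter (fun ij : Fin 4 × Fin 2 => p ∈ L ij.1 ij.2)).card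
      ≤ 10 := by
    calc _ ≤ ∑ _p ∈ ZF, 2 := Finset.sum_le_sum key
      _ = 10 := by simp [hcardF]
  omega
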